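/- For elements x_1, ..., x_n of a commutative ring, the determinant of the n×n matrix with (i,j)-entry x_i^{2n-2j+1} equals the product over 1 ≤ i < j ≤ n of (x_i^2 - x_j^2), multiplied by the product of all x_i for 1 ≤ i ≤ n. -/
import Mathlib

open Finset

lemma prod_Ioi_rev {M : Type*} [CommMonoid M] {n : ℕ} (f : Fin n → Fin n → M) :
    ∏ i : Fin n, ∏ j ∈ Ioi i, f (Fin.rev j) (Fin.rev i) =
      ∏ i : Fin n, ∏ j ∈ Ioi i, f i j := by
  rw [Finset.prod_sigma', Finset.prod_sigma']
  refine Finset.prod_nbij' (fun p => ⟨Fin.rev p.2, Fin.rev p.1⟩)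
    (fun p => ⟨Fin.rev p.2, Fin.rev p.1⟩) ?_ ?_ ?_ ?_ ?_ <;>
    simp [Fin.rev_lt_rev]

theorem det_odd_vandermonde {R : Type*} [CommRing R] (n : ℕ) (x : Fin n → R) :
    Matrix.det (Matrix.of fun i j : Fin n => x i ^ (2 * (n - 1 - (j : ℕ)) + 1)) =
    (∏ i : Fin n, ∏ j ∈ Finset.Ioi i, (x i ^ 2 - x j ^ 2)) * ∏ i : Fin n, x i := by
  have h1 : (Matrix.of fun i j : Fin n => x i ^ (2 * (n - 1 - (j : ℕ)) + 1)) =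
      Matrix.of fun i j : Fin n => x i * ((Matrix.vandermonde fun i => x i ^ 2).submatrix id Fin.rev i j) := by
    ext i j
    simp [Matrix.vandermonde, Fin.val_rev, pow_succ, pow_mul, mul_pow, mul_comm,
      Nat.sub_sub, Nat.add_comm 1 (j : ℕ)]
  rw [h1, Matrix.det_mul_column]
  have h2 : ((Matrix.vandermonde fun i => x i ^ 2).submatrix id Fin.rev).det =
      ((Matrix.vandermonde fun i => x i ^ 2).submatrix Fin.rev id).det := by
    rw [show (Fin.rev : Fin n → Fin n) = ⇑(Fin.revPerm) from rfl,
      Matrix.det_permute, Matrix.det_permute']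
  have h3 : (Matrix.vandermonde fun i => x i ^ 2).submatrix Fin.rev id =
      Matrix.vandermonde fun i => x (Fin.rev i) ^ 2 := rfl
  rw [h2, h3, Matrix.det_vandermonde, mul_comm,
    ← prod_Ioi_rev (fun i j => x i ^ 2 - x j ^ 2)]
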